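/- Let (A, r) be a pair of a cocommutative bialgebra A over K and r ∈ A^{⊗2} with (Δ⊗id)(r) = r^{13} + r^{23}, (id⊗Δ)(r) = r^{12} + r^{13}, CYB(r) = 0, and [r + r^{21}, Δ(x)] = 0 for all x. Then δ(x) := [r, Δ(x)] defines a co-Poisson structure on A, making A a co-Poisson cocommutative bialgebra. -/

import Mathlib

open TensorProduct
set_option linter.unusedSectionVars false

noncomputable section

variable (K : Type*) [Field K] [CharZero K]
variable (A : Type*) [Ring A] [Bialgebra K A]

/-- `x ⊗ y ↦ x ⊗ y ⊗ 1`. -/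
def e12 : A ⊗[K] A →ₗ[K] A ⊗[K] (A ⊗[K] A) :=
  TensorProduct.map LinearMap.id ((TensorProduct.mk K A A).flip 1)

/-- `t ↦ 1 ⊗ t`. -/
def e23 : A ⊗[K] A →ₗ[K] A ⊗[K] (A ⊗[K] A) :=
  TensorProduct.mk K A (A ⊗[K] A) 1

/-- `x ⊗ y ↦ x ⊗ 1 ⊗ y`. -/
def e13 : A ⊗[K] A →ₗ[K] A ⊗[K] (A ⊗[K] A) :=
  (TensorProduct.map LinearMap.id (TensorProduct.comm K A A).toLinearMap) ∘ₗ e12 K A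

/-- The flip of `A ⊗ A`. -/
def tau : A ⊗[K] A →ₗ[K] A ⊗[K] A := (TensorProduct.comm K A A).toLinearMap

/-- Swap of the first two factors of `A ⊗ A ⊗ A`. -/
def s12 : A ⊗[K] (A ⊗[K] A) →ₗ[K] A ⊗[K] (A ⊗[K] A) :=
  (TensorProduct.assoc K A A A).toLinearMap ∘ₗ
    (TensorProduct.map (TensorProduct.comm K A A).toLinearMap LinearMap.id) ∘ₗ
      (TensorProduct.assoc K A A A).symm.toLinearMap

/-- Swap of the last two factors of `A ⊗ A ⊗ A`. -/
def s23 : A ⊗[K] (A ⊗[K] A) →ₗ[K] A ⊗[K] (A ⊗[K] A) :=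
  TensorProduct.map LinearMap.id (TensorProduct.comm K A A).toLinearMap

/-- `Δ ⊗ id`. -/
def D1 : A ⊗[K] A →ₗ[K] A ⊗[K] (A ⊗[K] A) :=
  (TensorProduct.assoc K A A A).toLinearMap ∘ₗ TensorProduct.map Coalgebra.comul LinearMap.id

/-- `id ⊗ Δ`. -/
def D2 : A ⊗[K] A →ₗ[K] A ⊗[K] (A ⊗[K] A) :=
  TensorProduct.map LinearMap.id Coalgebra.comul

/-- `δ(x) = [r, Δ(x)]` as a linear map. -/
def delta (r : A ⊗[K] A) : A →ₗ[K] A ⊗[K] A :=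
  (LinearMap.mulLeft K r - LinearMap.mulRight K r) ∘ₗ
    (Coalgebra.comul : A →ₗ[K] A ⊗[K] A)

/-! ### Auxiliary lemmas -/

section Aux

/-- `s12` as an algebra hom. -/
def s12A : A ⊗[K] (A ⊗[K] A) →ₐ[K] A ⊗[K] (A ⊗[K] A) :=
  ((Algebra.TensorProduct.assoc K K K A A A).toAlgHom.comp
    ((Algebra.TensorProduct.map (Algebra.TensorProduct.comm K A A).toAlgHom (AlgHom.id K A)).comp
      (Algebra.TensorProduct.assoc K K K A A A).symm.toAlgHom))

/-- `s23` as an algebra hom. -/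
def s23A : A ⊗[K] (A ⊗[K] A) →ₐ[K] A ⊗[K] (A ⊗[K] A) :=
  Algebra.TensorProduct.map (AlgHom.id K A) (Algebra.TensorProduct.comm K A A).toAlgHom

/-- `D1` as an algebra hom. -/
def D1A : A ⊗[K] A →ₐ[K] A ⊗[K] (A ⊗[K] A) :=
  (Algebra.TensorProduct.assoc K K K A A A).toAlgHom.comp
    (Algebra.TensorProduct.map (Bialgebra.comulAlgHom K A) (AlgHom.id K A))

lemma s12_eq : s12 K A = (s12A K A).toLinearMap := rfl
lemma s23_eq : s23 K A = (s23A K A).toLinearMap := rfl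
lemma D1_eq : D1 K A = (D1A K A).toLinearMap := rfl
lemma tau_eq : tau K A = (Algebra.TensorProduct.comm K A A).toAlgHom.toLinearMap := rfl

lemma tau_mul (u v : A ⊗[K] A) : tau K A (u * v) = tau K A u * tau K A v :=
  map_mul (Algebra.TensorProduct.comm K A A).toAlgHom u v

lemma s12_mul (u v : A ⊗[K] (A ⊗[K] A)) : s12 K A (u * v) = s12 K A u * s12 K A v :=
  map_mul (s12A K A) u v

lemma s23_mul (u v : A ⊗[K] (A ⊗[K] A)) : s23 K A (u * v) = s23 K A u * s23 K A v :=
  map_mul (s23A K A) u v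

lemma D1_mul (u v : A ⊗[K] A) : D1 K A (u * v) = D1 K A u * D1 K A v :=
  map_mul (D1A K A) u v

lemma comul_mul (a b : A) :
    (Coalgebra.comul (R := K) (a * b) : A ⊗[K] A) = Coalgebra.comul a * Coalgebra.comul b :=
  map_mul (Bialgebra.comulAlgHom K A) a b

lemma tau_tmul (a b : A) : tau K A (a ⊗ₜ[K] b) = b ⊗ₜ[K] a := rfl

lemma tau_tau (v : A ⊗[K] A) : tau K A (tau K A v) = v := by
  induction v using TensorProduct.induction_on with
  | zero => simp
  | tmul a b => rfl
  | add x y hx hy => rw [map_add, map_add, hx, hy]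

lemma e12_tmul (a b : A) : e12 K A (a ⊗ₜ[K] b) = a ⊗ₜ[K] (b ⊗ₜ[K] 1) := rfl

lemma e13_tmul (a b : A) : e13 K A (a ⊗ₜ[K] b) = a ⊗ₜ[K] ((1 : A) ⊗ₜ[K] b) := rfl

lemma e23_apply (v : A ⊗[K] A) : e23 K A v = (1 : A) ⊗ₜ[K] v := rfl

lemma s23_tmul (a : A) (m : A ⊗[K] A) : s23 K A (a ⊗ₜ[K] m) = a ⊗ₜ[K] tau K A m := rfl

lemma s12_tmul (a b c : A) :
    s12 K A (a ⊗ₜ[K] (b ⊗ₜ[K] c)) = b ⊗ₜ[K] (a ⊗ₜ[K] c) := by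
  simp [s12]

lemma D1_tmul (a b : A) :
    D1 K A (a ⊗ₜ[K] b) =
      (TensorProduct.assoc K A A A) ((Coalgebra.comul a : A ⊗[K] A) ⊗ₜ[K] b) := rfl

lemma D2_tmul (a b : A) :
    D2 K A (a ⊗ₜ[K] b) = a ⊗ₜ[K] (Coalgebra.comul b : A ⊗[K] A) := rfl

lemma s23_e12 (v : A ⊗[K] A) : s23 K A (e12 K A v) = e13 K A v := rfl

lemma s23_e13 (v : A ⊗[K] A) : s23 K A (e13 K A v) = e12 K A v := by
  induction v using TensorProduct.induction_on with
  | zero => simp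
  | tmul a b => rfl
  | add x y hx hy => simp only [map_add, hx, hy]

lemma s23_e23 (v : A ⊗[K] A) : s23 K A (e23 K A v) = e23 K A (tau K A v) := rfl

lemma s12_e12 (v : A ⊗[K] A) : s12 K A (e12 K A v) = e12 K A (tau K A v) := by
  induction v using TensorProduct.induction_on with
  | zero => simp
  | tmul a b => rw [e12_tmul, s12_tmul, tau_tmul, e12_tmul]
  | add x y hx hy => simp only [map_add, hx, hy]

lemma s12_e13 (v : A ⊗[K] A) : s12 K A (e13 K A v) = e23 K A v := by
  induction v using TensorProduct.induction_on with
  | zero => simp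
  | tmul a b => rw [e13_tmul, s12_tmul, e23_apply]
  | add x y hx hy => simp only [map_add, hx, hy]

lemma s12_e23 (v : A ⊗[K] A) : s12 K A (e23 K A v) = e13 K A v := by
  induction v using TensorProduct.induction_on with
  | zero => simp
  | tmul a b => rw [e23_apply, s12_tmul, e13_tmul]
  | add x y hx hy => simp only [map_add, hx, hy]

lemma assoc_tmul3 (a b c : A) :
    (TensorProduct.assoc K A A A) ((a ⊗ₜ[K] b) ⊗ₜ[K] c) = a ⊗ₜ[K] (b ⊗ₜ[K] c) := rfl

lemma e12_mul_assoc (v c : A ⊗[K] A) (b : A) :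
    e12 K A v * (TensorProduct.assoc K A A A) (c ⊗ₜ[K] b) =
      (TensorProduct.assoc K A A A) ((v * c) ⊗ₜ[K] b) := by
  induction v using TensorProduct.induction_on with
  | zero =>
      simp only [LinearMap.map_zero, zero_mul, zero_tmul, LinearEquiv.map_zero]
  | tmul p q =>
      induction c using TensorProduct.induction_on with
      | zero =>
          simp only [mul_zero, zero_mul, zero_tmul, LinearEquiv.map_zero]
      | tmul x y =>
          rw [e12_tmul, assoc_tmul3, Algebra.TensorProduct.tmul_mul_tmul,
            Algebra.TensorProduct.tmul_mul_tmul, Algebra.TensorProduct.tmul_mul_tmul, one_mul,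
            assoc_tmul3]
      | add x y hx hy =>
          simp only [add_tmul, LinearEquiv.map_add, mul_add, add_mul, hx, hy]
  | add x y hx hy =>
      simp only [LinearMap.map_add, add_tmul, LinearEquiv.map_add, mul_add, add_mul, hx, hy]

lemma assoc_mul_e12 (v c : A ⊗[K] A) (b : A) :
    (TensorProduct.assoc K A A A) (c ⊗ₜ[K] b) * e12 K A v =
      (TensorProduct.assoc K A A A) ((c * v) ⊗ₜ[K] b) := by
  induction v using TensorProduct.induction_on with
  | zero =>
      simp only [LinearMap.map_zero, mul_zero, zero_tmul, LinearEquiv.map_zero]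
  | tmul p q =>
      induction c using TensorProduct.induction_on with
      | zero =>
          simp only [zero_mul, zero_tmul, LinearEquiv.map_zero]
      | tmul x y =>
          rw [e12_tmul, assoc_tmul3, Algebra.TensorProduct.tmul_mul_tmul,
            Algebra.TensorProduct.tmul_mul_tmul, Algebra.TensorProduct.tmul_mul_tmul, mul_one,
            assoc_tmul3]
      | add x y hx hy =>
          simp only [add_tmul, LinearEquiv.map_add, mul_add, add_mul, hx, hy]
  | add x y hx hy =>
      simp only [LinearMap.map_add, add_tmul, LinearEquiv.map_add, mul_add, add_mul, hx, hy]

lemma e23_mul_D2 (v : A ⊗[K] A) (w : A ⊗[K] A) :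
    e23 K A v * D2 K A w =
      (TensorProduct.map LinearMap.id (LinearMap.mulLeft K v ∘ₗ
        (Coalgebra.comul : A →ₗ[K] A ⊗[K] A))) w := by
  induction w using TensorProduct.induction_on with
  | zero => simp
  | tmul a b =>
      rw [D2_tmul, e23_apply, Algebra.TensorProduct.tmul_mul_tmul, one_mul, map_tmul]
      rfl
  | add x y hx hy => rw [map_add, mul_add, hx, hy, map_add]

lemma D2_mul_e23 (v : A ⊗[K] A) (w : A ⊗[K] A) :
    D2 K A w * e23 K A v =
      (TensorProduct.map LinearMap.id (LinearMap.mulRight K v ∘ₗ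
        (Coalgebra.comul : A →ₗ[K] A ⊗[K] A))) w := by
  induction w using TensorProduct.induction_on with
  | zero => simp only [LinearMap.map_zero, zero_mul]
  | tmul a b =>
      rw [D2_tmul, e23_apply, Algebra.TensorProduct.tmul_mul_tmul, mul_one, map_tmul]
      rfl
  | add x y hx hy => rw [map_add, add_mul, hx, hy, map_add]

lemma delta_apply (r : A ⊗[K] A) (x : A) :
    delta K A r x = r * Coalgebra.comul x - Coalgebra.comul x * r := rfl

lemma e12_comm_D1 (v : A ⊗[K] A)
    (hv : ∀ y : A, v * Coalgebra.comul y = Coalgebra.comul y * v) (w : A ⊗[K] A) :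
    e12 K A v * D1 K A w = D1 K A w * e12 K A v := by
  induction w using TensorProduct.induction_on with
  | zero => simp only [LinearMap.map_zero, zero_mul, mul_zero]
  | tmul a b => rw [D1_tmul, e12_mul_assoc, hv a, ← assoc_mul_e12]
  | add x y hx hy => simp only [LinearMap.map_add, mul_add, add_mul, hx, hy]

lemma e23_comm_D2 (v : A ⊗[K] A)
    (hv : ∀ y : A, v * Coalgebra.comul y = Coalgebra.comul y * v) (w : A ⊗[K] A) :
    e23 K A v * D2 K A w = D2 K A w * e23 K A v := by
  rw [e23_mul_D2, D2_mul_e23]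
  have h : LinearMap.mulLeft K v ∘ₗ (Coalgebra.comul : A →ₗ[K] A ⊗[K] A) =
      LinearMap.mulRight K v ∘ₗ (Coalgebra.comul : A →ₗ[K] A ⊗[K] A) :=
    LinearMap.ext fun y => hv y
  rw [h]

lemma map_id_delta (r : A ⊗[K] A) (w : A ⊗[K] A) :
    TensorProduct.map LinearMap.id (delta K A r) w =
      e23 K A r * D2 K A w - D2 K A w * e23 K A r := by
  induction w using TensorProduct.induction_on with
  | zero => simp only [LinearMap.map_zero, zero_mul, mul_zero, sub_zero]
  | tmul a b =>
      rw [map_tmul, delta_apply, tmul_sub, D2_tmul, e23_apply,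
        Algebra.TensorProduct.tmul_mul_tmul, Algebra.TensorProduct.tmul_mul_tmul,
        one_mul, mul_one]
      rfl
  | add x y hx hy =>
      simp only [LinearMap.map_add, mul_add, add_mul, hx, hy]
      abel

lemma assoc_map_delta_id (r : A ⊗[K] A) (w : A ⊗[K] A) :
    (TensorProduct.assoc K A A A) (TensorProduct.map (delta K A r) LinearMap.id w) =
      e12 K A r * D1 K A w - D1 K A w * e12 K A r := by
  induction w using TensorProduct.induction_on with
  | zero => simp only [LinearMap.map_zero, LinearEquiv.map_zero, zero_mul, mul_zero, sub_zero]
  | tmul a b =>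
      have hm : TensorProduct.map (delta K A r) LinearMap.id (a ⊗ₜ[K] b) =
          (delta K A r a) ⊗ₜ[K] b := by
        simp only [map_tmul, LinearMap.id_coe, id_eq]
      rw [hm, delta_apply, sub_tmul, map_sub, D1_tmul, e12_mul_assoc, assoc_mul_e12]
  | add x y hx hy =>
      simp only [LinearMap.map_add, LinearEquiv.map_add, mul_add, add_mul, hx, hy]
      abel

lemma s23_D2 (hcc : ∀ a : A, tau K A (Coalgebra.comul a) = Coalgebra.comul a)
    (w : A ⊗[K] A) : s23 K A (D2 K A w) = D2 K A w := by
  induction w using TensorProduct.induction_on with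
  | zero => simp only [LinearMap.map_zero]
  | tmul a b => rw [D2_tmul, s23_tmul, hcc b]
  | add x y hx hy => simp only [LinearMap.map_add, hx, hy]

lemma s12_assoc_tmul (c : A ⊗[K] A) (b : A) :
    s12 K A ((TensorProduct.assoc K A A A) (c ⊗ₜ[K] b)) =
      (TensorProduct.assoc K A A A) ((tau K A c) ⊗ₜ[K] b) := by
  induction c using TensorProduct.induction_on with
  | zero => simp only [zero_tmul, LinearEquiv.map_zero, LinearMap.map_zero]
  | tmul p q => rw [assoc_tmul3, s12_tmul, tau_tmul, assoc_tmul3]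
  | add p q hp hq =>
      simp only [add_tmul, LinearEquiv.map_add, LinearMap.map_add, hp, hq]

lemma s12_D1 (hcc : ∀ a : A, tau K A (Coalgebra.comul a) = Coalgebra.comul a)
    (w : A ⊗[K] A) : s12 K A (D1 K A w) = D1 K A w := by
  induction w using TensorProduct.induction_on with
  | zero => simp only [LinearMap.map_zero]
  | tmul a b => rw [D1_tmul, s12_assoc_tmul, hcc a]
  | add x y hx hy => simp only [LinearMap.map_add, hx, hy]

lemma D1_comul_eq_D2 (x : A) :
    D1 K A (Coalgebra.comul x) = D2 K A (Coalgebra.comul x) :=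
  DFunLike.congr_fun (Coalgebra.coassoc (R := K) (A := A)) x

end Aux

lemma compat_cert {R : Type*} [Ring R] (a b X : R) :
    (a + b) * X - X * (a + b) = (b * X - X * b) + (a * X - X * a) := by noncomm_ring

lemma deriv_cert {R : Type*} [Ring R] (r p q : R) :
    r * (p * q) - p * q * r = (r * p - p * r) * q + p * (r * q - q * r) := by noncomm_ring

/-- The abstract ring-theoretic certificate for the co-Jacobi identity. -/
lemma coJacobi_cert {R : Type*} [Ring R] (X r12 r13 r23 t12 t13 t23 : R)
    (A12 : (r12 + t12) * X = X * (r12 + t12))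
    (A13 : (r13 + t13) * X = X * (r13 + t13))
    (A23 : (r23 + t23) * X = X * (r23 + t23))
    (D : (r13 + t13) * (r12 + t23) = (r12 + t23) * (r13 + t13))
    (Y : (r12 * r13 - r13 * r12) + (r12 * r23 - r23 * r12) + (r13 * r23 - r23 * r13) = 0) :
    (r12 * ((r13 + r23) * X - X * (r13 + r23)) -
        ((r13 + r23) * X - X * (r13 + r23)) * r12) +
      (r23 * ((t12 + t13) * X - X * (t12 + t13)) -
        ((t12 + t13) * X - X * (t12 + t13)) * r23) +
      (t13 * ((t23 + r12) * X - X * (t23 + r12)) -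
        ((t23 + r12) * X - X * (t23 + r12)) * t13) = 0 := by
  have E12 := sub_eq_zero_of_eq A12
  have E13 := sub_eq_zero_of_eq A13
  have E23 := sub_eq_zero_of_eq A23
  have ED := sub_eq_zero_of_eq D
  calc
    (r12 * ((r13 + r23) * X - X * (r13 + r23)) -
        ((r13 + r23) * X - X * (r13 + r23)) * r12) +
      (r23 * ((t12 + t13) * X - X * (t12 + t13)) -
        ((t12 + t13) * X - X * (t12 + t13)) * r23) +
      (t13 * ((t23 + r12) * X - X * (t23 + r12)) -
        ((t23 + r12) * X - X * (t23 + r12)) * t13)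
      = (r23 * ((r12 + t12) * X - X * (r12 + t12)) -
            ((r12 + t12) * X - X * (r12 + t12)) * r23) +
          ((r12 + r23 + t23) * ((r13 + t13) * X - X * (r13 + t13)) -
            ((r13 + t13) * X - X * (r13 + t13)) * (r12 + r23 + t23)) -
          (r13 * ((r23 + t23) * X - X * (r23 + t23)) -
            ((r23 + t23) * X - X * (r23 + t23)) * r13) +
          (((r13 + t13) * (r12 + t23) - (r12 + t23) * (r13 + t13)) * X -
            X * ((r13 + t13) * (r12 + t23) - (r12 + t23) * (r13 + t13))) +
          (((r12 * r13 - r13 * r12) + (r12 * r23 - r23 * r12) + (r13 * r23 - r23 * r13)) * X -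
            X * ((r12 * r13 - r13 * r12) + (r12 * r23 - r23 * r12) +
              (r13 * r23 - r23 * r13))) := by noncomm_ring
    _ = 0 := by rw [E12, E13, E23, ED, Y]; noncomm_ring


set_option maxHeartbeats 2000000

theorem stmt11
    (hcc : ∀ a : A, tau K A (Coalgebra.comul a) = Coalgebra.comul a)
    (r : A ⊗[K] A)
    (hr1 : D1 K A r = e13 K A r + e23 K A r)
    (hr2 : D2 K A r = e12 K A r + e13 K A r)
    (hcyb : (e12 K A r * e13 K A r - e13 K A r * e12 K A r) +
        (e12 K A r * e23 K A r - e23 K A r * e12 K A r) +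
        (e13 K A r * e23 K A r - e23 K A r * e13 K A r) = 0)
    (hinvt : ∀ x : A, (r + tau K A r) * Coalgebra.comul x =
      Coalgebra.comul x * (r + tau K A r)) :
    -- antisymmetry
    (∀ x : A, delta K A r x + tau K A (delta K A r x) = 0) ∧
    -- co-Jacobi
    (∀ x : A,
      (((TensorProduct.assoc K A A A).toLinearMap ∘ₗ
          TensorProduct.map (delta K A r) LinearMap.id) (delta K A r x)) +
        (s12 K A) ((s23 K A) (((TensorProduct.assoc K A A A).toLinearMap ∘ₗ
          TensorProduct.map (delta K A r) LinearMap.id) (delta K A r x))) +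
        (s23 K A) ((s12 K A) (((TensorProduct.assoc K A A A).toLinearMap ∘ₗ
          TensorProduct.map (delta K A r) LinearMap.id) (delta K A r x))) = 0) ∧
    -- compatibility (Δ⊗id)∘δ = ((123)+(213))∘(id⊗δ)∘Δ
    (∀ x : A,
      D1 K A (delta K A r x) =
        (TensorProduct.map LinearMap.id (delta K A r)) (Coalgebra.comul x) +
          (s12 K A) ((TensorProduct.map LinearMap.id (delta K A r)) (Coalgebra.comul x))) ∧
    -- derivation property
    (∀ a b : A, delta K A r (a * b) =
      delta K A r a * Coalgebra.comul b + Coalgebra.comul a * delta K A r b) := by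
  refine ⟨?_, ?_, ?_, ?_⟩
  · -- antisymmetry
    intro x
    have h1 : tau K A (delta K A r x) =
        tau K A r * Coalgebra.comul x - Coalgebra.comul x * tau K A r := by
      rw [delta_apply, map_sub, tau_mul, tau_mul, hcc x]
    rw [h1, delta_apply]
    have h2 : (r * Coalgebra.comul x - Coalgebra.comul x * r) +
        (tau K A r * Coalgebra.comul x - Coalgebra.comul x * tau K A r) =
        (r + tau K A r) * Coalgebra.comul x - Coalgebra.comul x * (r + tau K A r) := by
      noncomm_ring
    rw [h2, hinvt x, sub_self]
  · -- co-Jacobi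
    intro x
    have hs23X : s23 K A (D1 K A (Coalgebra.comul x)) = D1 K A (Coalgebra.comul x) := by
      rw [D1_comul_eq_D2, s23_D2 K A hcc]
    have hs12X : s12 K A (D1 K A (Coalgebra.comul x)) = D1 K A (Coalgebra.comul x) :=
      s12_D1 K A hcc _
    have h1 : (((TensorProduct.assoc K A A A).toLinearMap ∘ₗ
          TensorProduct.map (delta K A r) LinearMap.id) (delta K A r x)) =
        e12 K A r * ((e13 K A r + e23 K A r) * D1 K A (Coalgebra.comul x) -
            D1 K A (Coalgebra.comul x) * (e13 K A r + e23 K A r)) -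
          ((e13 K A r + e23 K A r) * D1 K A (Coalgebra.comul x) -
            D1 K A (Coalgebra.comul x) * (e13 K A r + e23 K A r)) * e12 K A r := by
      have hD : D1 K A (delta K A r x) =
          (e13 K A r + e23 K A r) * D1 K A (Coalgebra.comul x) -
            D1 K A (Coalgebra.comul x) * (e13 K A r + e23 K A r) := by
        rw [delta_apply, map_sub, D1_mul, D1_mul, hr1]
      calc (((TensorProduct.assoc K A A A).toLinearMap ∘ₗ
          TensorProduct.map (delta K A r) LinearMap.id) (delta K A r x))
          = (TensorProduct.assoc K A A A)
              (TensorProduct.map (delta K A r) LinearMap.id (delta K A r x)) := rfl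
        _ = e12 K A r * D1 K A (delta K A r x) - D1 K A (delta K A r x) * e12 K A r :=
            assoc_map_delta_id K A r _
        _ = _ := by rw [hD]
    -- relations
    have A12 := e12_comm_D1 K A (r + tau K A r) hinvt (Coalgebra.comul x)
    have A23 : e23 K A (r + tau K A r) * D1 K A (Coalgebra.comul x) =
        D1 K A (Coalgebra.comul x) * e23 K A (r + tau K A r) := by
      rw [D1_comul_eq_D2]
      exact e23_comm_D2 K A (r + tau K A r) hinvt (Coalgebra.comul x)
    have A13 : e13 K A (r + tau K A r) * D1 K A (Coalgebra.comul x) =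
        D1 K A (Coalgebra.comul x) * e13 K A (r + tau K A r) := by
      have h := congrArg (s23 K A) A12
      rw [s23_mul, s23_mul, s23_e12, hs23X] at h
      exact h
    have Drel : e13 K A (r + tau K A r) * (e12 K A r + e23 K A (tau K A r)) =
        (e12 K A r + e23 K A (tau K A r)) * e13 K A (r + tau K A r) := by
      have h := congrArg (s23 K A) (e12_comm_D1 K A (r + tau K A r) hinvt r)
      rw [s23_mul, s23_mul, s23_e12, hr1, map_add (s23 K A) (e13 K A r) (e23 K A r),
        s23_e13, s23_e23] at h
      exact h
    rw [map_add] at A12 A23 A13 Drel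
    have t2 : s12 K A (s23 K A (((TensorProduct.assoc K A A A).toLinearMap ∘ₗ
          TensorProduct.map (delta K A r) LinearMap.id) (delta K A r x))) =
        e23 K A r * ((e12 K A (tau K A r) + e13 K A (tau K A r)) * D1 K A (Coalgebra.comul x) -
            D1 K A (Coalgebra.comul x) * (e12 K A (tau K A r) + e13 K A (tau K A r))) -
          ((e12 K A (tau K A r) + e13 K A (tau K A r)) * D1 K A (Coalgebra.comul x) -
            D1 K A (Coalgebra.comul x) * (e12 K A (tau K A r) + e13 K A (tau K A r))) *
            e23 K A r := by
      rw [h1]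
      simp only [map_sub, map_add, s23_mul, s12_mul, s23_e12, s23_e13, s23_e23,
        s12_e12, s12_e13, s12_e23, hs23X, hs12X, tau_tau]
    have t3 : s23 K A (s12 K A (((TensorProduct.assoc K A A A).toLinearMap ∘ₗ
          TensorProduct.map (delta K A r) LinearMap.id) (delta K A r x))) =
        e13 K A (tau K A r) * ((e23 K A (tau K A r) + e12 K A r) * D1 K A (Coalgebra.comul x) -
            D1 K A (Coalgebra.comul x) * (e23 K A (tau K A r) + e12 K A r)) -
          ((e23 K A (tau K A r) + e12 K A r) * D1 K A (Coalgebra.comul x) -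
            D1 K A (Coalgebra.comul x) * (e23 K A (tau K A r) + e12 K A r)) *
            e13 K A (tau K A r) := by
      rw [h1]
      simp only [map_sub, map_add, s23_mul, s12_mul, s23_e12, s23_e13, s23_e23,
        s12_e12, s12_e13, s12_e23, hs23X, hs12X, tau_tau]
    rw [t2, t3, h1]
    exact coJacobi_cert (D1 K A (Coalgebra.comul x)) (e12 K A r) (e13 K A r) (e23 K A r)
      (e12 K A (tau K A r)) (e13 K A (tau K A r)) (e23 K A (tau K A r))
      A12 A13 A23 Drel hcyb
  · -- compatibility
    intro x
    have hL : D1 K A (delta K A r x) =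
        (e13 K A r + e23 K A r) * D1 K A (Coalgebra.comul x) -
          D1 K A (Coalgebra.comul x) * (e13 K A r + e23 K A r) := by
      rw [delta_apply, map_sub, D1_mul, D1_mul, hr1]
    have hR : TensorProduct.map LinearMap.id (delta K A r) (Coalgebra.comul x) =
        e23 K A r * D1 K A (Coalgebra.comul x) -
          D1 K A (Coalgebra.comul x) * e23 K A r := by
      rw [map_id_delta, ← D1_comul_eq_D2]
    rw [hL, hR, map_sub, s12_mul, s12_mul, s12_e23, s12_D1 K A hcc]
    exact compat_cert (e13 K A r) (e23 K A r) (D1 K A (Coalgebra.comul x))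
  · -- derivation
    intro a b
    rw [delta_apply, delta_apply, delta_apply, comul_mul]
    exact deriv_cert r (Coalgebra.comul a) (Coalgebra.comul b)

end
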